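/- Let a : ℝ → (0,∞) and b : ℝ → (0,1) be continuous 1-periodic functions. Define d₀ = √(2∫₀¹ a(s)ds) · (1/2 - (∫₀¹ a(s)b(s)ds)/(∫₀¹ a(s)ds)) and d* = ∫₀¹ √(2a(s)) (1/2 - b(s)) ds. If b ≡ b₀ is a constant with 0 < b₀ < 1/2, then d₀ ≥ d* > 0; if 1/2 < b₀ < 1, then d₀ ≤ d* < 0. -/
import Mathlib


theorem stmt_12 (a b : ℝ → ℝ) (ha : Continuous a) (hb : Continuous b)
    (hap : ∀ s, a (s + 1) = a s) (hbp : ∀ s, b (s + 1) = b s)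
    (hapos : ∀ s, 0 < a s) (hbr : ∀ s, b s ∈ Set.Ioo (0:ℝ) 1)
    (b₀ : ℝ) (hbc : ∀ s, b s = b₀) :
    let d₀ : ℝ := Real.sqrt (2 * ∫ s in (0:ℝ)..1, a s) *
      (1 / 2 - (∫ s in (0:ℝ)..1, a s * b s) / (∫ s in (0:ℝ)..1, a s))
    let dstar : ℝ := ∫ s in (0:ℝ)..1, Real.sqrt (2 * a s) * (1 / 2 - b s)
    (0 < b₀ → b₀ < 1 / 2 → d₀ ≥ dstar ∧ dstar > 0) ∧
      (1 / 2 < b₀ → b₀ < 1 → d₀ ≤ dstar ∧ dstar < 0) := by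
  intro d₀ dstar
  set I : ℝ := ∫ s in (0:ℝ)..1, a s with hIdef
  set J : ℝ := ∫ s in (0:ℝ)..1, Real.sqrt (2 * a s) with hJdef
  have hI0 : 0 < I :=
    intervalIntegral.intervalIntegral_pos_of_pos (ha.intervalIntegrable 0 1) hapos one_pos
  have hsq : Continuous fun s => Real.sqrt (2 * a s) :=
    Real.continuous_sqrt.comp (continuous_const.mul ha)
  have hJ0 : 0 < J :=
    intervalIntegral.intervalIntegral_pos_of_pos (hsq.intervalIntegrable 0 1)
      (fun s => Real.sqrt_pos.mpr (by have := hapos s; linarith)) one_pos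
  -- the integral with b constant
  have hab : (∫ s in (0:ℝ)..1, a s * b s) = I * b₀ := by
    simp only [hbc]
    rw [intervalIntegral.integral_mul_const]
  have hdstar : dstar = J * (1 / 2 - b₀) := by
    simp only [dstar, hbc]
    rw [intervalIntegral.integral_mul_const]
  have hd₀ : d₀ = Real.sqrt (2 * I) * (1 / 2 - b₀) := by
    show Real.sqrt (2 * I) * (1 / 2 - (∫ s in (0:ℝ)..1, a s * b s) / I) = _
    rw [hab, mul_comm I b₀, mul_div_assoc, div_self hI0.ne', mul_one]
  -- Jensen's inequality
  haveI hprob : MeasureTheory.IsProbabilityMeasure (MeasureTheory.volume.restrict (Set.Ioc (0:ℝ) 1)) := by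
    constructor
    simp [Real.volume_Ioc]
  have hint2a : MeasureTheory.Integrable (fun x => 2 * a x)
      (MeasureTheory.volume.restrict (Set.Ioc (0:ℝ) 1)) :=
    (continuous_const.mul ha).integrableOn_Ioc
  have hintsq : MeasureTheory.Integrable (fun x => Real.sqrt (2 * a x))
      (MeasureTheory.volume.restrict (Set.Ioc (0:ℝ) 1)) :=
    hsq.integrableOn_Ioc
  have key : J ≤ Real.sqrt (2 * I) := by
    have h2I : (∫ x in Set.Ioc (0:ℝ) 1, 2 * a x) = 2 * I := by
      rw [hIdef, intervalIntegral.integral_of_le zero_le_one,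
        ← MeasureTheory.integral_const_mul]
    have := Real.strictConcaveOn_sqrt.concaveOn.le_map_integral
      (μ := MeasureTheory.volume.restrict (Set.Ioc (0:ℝ) 1))
      Real.continuous_sqrt.continuousOn isClosed_Ici
      (Filter.Eventually.of_forall fun x => by
        have := hapos x; simp only [Set.mem_Ici]; positivity)
      hint2a hintsq
    rw [hJdef, intervalIntegral.integral_of_le zero_le_one]
    calc (∫ x in Set.Ioc (0:ℝ) 1, Real.sqrt (2 * a x))
        ≤ Real.sqrt (∫ x in Set.Ioc (0:ℝ) 1, 2 * a x) := this
      _ = Real.sqrt (2 * I) := by rw [h2I]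
  constructor
  · intro _ h2
    have hp : (0:ℝ) < 1 / 2 - b₀ := by linarith
    refine ⟨?_, by rw [hdstar]; positivity⟩
    rw [hd₀, hdstar]
    exact mul_le_mul_of_nonneg_right key hp.le
  · intro h1 _
    have hn : 1 / 2 - b₀ < (0:ℝ) := by linarith
    constructor
    · rw [hd₀, hdstar]
      exact mul_le_mul_of_nonpos_right key hn.le
    · rw [hdstar]
      exact mul_neg_of_pos_of_neg hJ0 hn
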